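/- Under the setting of the previous decomposition, if L′ ≤ Var(Y | X) ≤ U′ and (E[Y|X] − μ̂)² ≤ M², then L′/e ≤ Var((1{D=1}/e)(Y − μ̂) | X) ≤ (U′ + M²)/e. -/

import Mathlib

open MeasureTheory ProbabilityTheory

/-- Bounds on the conditional variance of the IPW residual:
if `L′ ≤ Var(Y) ≤ U′` and `(E[Y] − μ̂)² ≤ M²`, then
`L′/e ≤ Var((1{D=1}/e)(Y − μ̂)) ≤ (U′ + M²)/e` (all conditional on `X`). -/
theorem stmt_1 {Ω : Type*} [MeasurableSpace Ω] (P : Measure Ω) [IsProbabilityMeasure P]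
    (A : Set Ω) (hA : MeasurableSet A) (Y : Ω → ℝ) (hY : MemLp Y 2 P)
    (e : ℝ) (he : 0 < e) (he1 : e ≤ 1) (hAe : (P A).toReal = e) (μhat : ℝ)
    (hInd : IndepFun (A.indicator (fun _ => (1 : ℝ))) Y P)
    (L' U' M : ℝ) (hL : L' ≤ variance Y P) (hU : variance Y P ≤ U')
    (hM : ((∫ ω, Y ω ∂P) - μhat) ^ 2 ≤ M ^ 2) :
    L' / e ≤ variance (fun ω => A.indicator (fun _ => (1 : ℝ)) ω * (Y ω - μhat) / e) P ∧
      variance (fun ω => A.indicator (fun _ => (1 : ℝ)) ω * (Y ω - μhat) / e) P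
        ≤ (U' + M ^ 2) / e := by
  set I : Ω → ℝ := A.indicator (fun _ => (1 : ℝ)) with hI
  set Z : Ω → ℝ := fun ω => Y ω - μhat with hZdef
  have hZ : MemLp Z 2 P := hY.sub (memLp_const μhat)
  have hIZeq : ∀ ω, I ω * Z ω = A.indicator Z ω := by
    intro ω
    by_cases h : ω ∈ A <;> simp [hI, h]
  have hW : MemLp (fun ω => I ω * Z ω / e) 2 P := by
    have h0 : MemLp (A.indicator Z) 2 P := MemLp.indicator hA hZ
    have h2 := h0.const_mul e⁻¹
    have heq : (fun ω => I ω * Z ω / e) = fun ω => e⁻¹ * A.indicator Z ω := by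
      funext ω; rw [← hIZeq ω]; ring
    rw [heq]; exact h2
  set m : ℝ := (∫ ω, Y ω ∂P) - μhat with hm
  have hYint : Integrable Y P := hY.integrable one_le_two
  have hZmean : ∫ ω, Z ω ∂P = m := by
    rw [hm, hZdef]
    rw [integral_sub hYint (integrable_const μhat)]
    simp
  have hIint : ∫ ω, I ω ∂P = e := by
    rw [hI, integral_indicator_const _ hA]
    simp [hAe, measureReal_def]
  have hIm : AEStronglyMeasurable I P :=
    ((measurable_const.indicator hA).aestronglyMeasurable)
  -- independence of I and Z, and of I and Z^2
  have hIndZ : IndepFun I Z P := hInd.comp measurable_id (measurable_id.sub_const μhat)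
  have hIndZ2 : IndepFun I (fun ω => Z ω ^ 2) P :=
    hInd.comp measurable_id (((measurable_id.sub_const μhat).pow_const 2))
  have hZm : AEStronglyMeasurable Z P := hZ.aestronglyMeasurable
  have hZ2m : AEStronglyMeasurable (fun ω => Z ω ^ 2) P := hZm.pow 2
  have hEW : ∫ ω, I ω * Z ω / e ∂P = m := by
    have h1 : ∫ ω, I ω * Z ω ∂P = e * m := by
      rw [show (fun ω => I ω * Z ω) = I * Z from rfl] at *
      rw [hIndZ.integral_mul_eq_mul_integral hIm hZm]
      rw [hIint, hZmean]
    calc ∫ ω, I ω * Z ω / e ∂P = (∫ ω, I ω * Z ω ∂P) / e := by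
          rw [integral_div]
      _ = m := by rw [h1]; field_simp
  have hEW2 : ∫ ω, (I ω * Z ω / e) ^ 2 ∂P = (∫ ω, Z ω ^ 2 ∂P) / e := by
    have hIsq : ∀ ω, (I ω) ^ 2 = I ω := by
      intro ω; by_cases h : ω ∈ A <;> simp [hI, h]
    have h1 : ∫ ω, I ω * Z ω ^ 2 ∂P = e * ∫ ω, Z ω ^ 2 ∂P := by
      rw [show (∫ ω, I ω * Z ω ^ 2 ∂P) = ∫ ω, (I * fun ω => Z ω ^ 2) ω ∂P from rfl,
        hIndZ2.integral_mul_eq_mul_integral hIm hZ2m, hIint]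
    calc ∫ ω, (I ω * Z ω / e) ^ 2 ∂P = ∫ ω, (I ω * Z ω ^ 2) / e ^ 2 ∂P := by
          congr 1; funext ω
          rw [div_pow, mul_pow, hIsq]
      _ = (∫ ω, I ω * Z ω ^ 2 ∂P) / e ^ 2 := by rw [integral_div]
      _ = (∫ ω, Z ω ^ 2 ∂P) / e := by rw [h1]; field_simp
  have hVarZ : variance Z P = (∫ ω, Z ω ^ 2 ∂P) - m ^ 2 := by
    rw [variance_eq_sub hZ, hZmean]
    rfl
  have hVarYZ : variance Y P = variance Z P := by
    rw [variance_eq_sub hZ, variance_eq_sub hY, hZmean]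
    have : ∫ ω, Z ω ^ 2 ∂P = ∫ ω, (Y ω ^ 2 - 2 * μhat * Y ω + μhat ^ 2) ∂P := by
      congr 1; funext ω; rw [hZdef]; ring
    rw [show (Z ^ 2) = fun ω => Z ω ^ 2 from rfl, this,
      integral_add (by exact (hY.integrable_sq.sub (hYint.const_mul _))) (integrable_const _),
      integral_sub hY.integrable_sq (hYint.const_mul _), integral_const, integral_const_mul]
    simp [hm]
    ring
  have hVarW : variance (fun ω => I ω * Z ω / e) P
      = (variance Y P + (1 - e) * m ^ 2) / e := by
    rw [variance_eq_sub hW]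
    have : (fun ω => I ω * Z ω / e) ^ 2 = fun ω => (I ω * Z ω / e) ^ 2 := rfl
    rw [this, hEW2, hEW, hVarYZ, hVarZ]
    field_simp
    ring
  have hm2 : 0 ≤ m ^ 2 := sq_nonneg m
  have h1e : 0 ≤ 1 - e := by linarith
  constructor
  · rw [hVarW]
    apply div_le_div_of_nonneg_right ?_ he.le |>.trans_eq rfl
    nlinarith
  · rw [hVarW]
    apply div_le_div_of_nonneg_right ?_ he.le |>.trans_eq rfl
    nlinarith
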